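/- Convolution with an exponentially stable semigroup preserves asymptotic almost automorphy: Let (T(t))_{t≥0} be an exponentially stable C₀-semigroup on Y with constants M ≥ 1 and α > 0, and let g : ℝ → Y be bounded, continuous and asymptotically almost automorphic. Then for every s ∈ ℝ the Bochner integral Λ(s) = ∫_{−∞}^s T(s−t) g(t) dt converges absolutely, and the function Λ : ℝ → Y is asymptotically almost automorphic. -/

import Mathlib

open Filter Topology MeasureTheory

/-- A continuous function `f : ℝ → Y` is almost automorphic if for every sequence of reals
there is a subsequence `(τ n)` and a function `f̄` such that `f (s + τ n) → f̄ s` and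
`f̄ (s - τ n) → f s` pointwise. -/
def AlmostAutomorphic {Y : Type*} [NormedAddCommGroup Y] (f : ℝ → Y) : Prop :=
  Continuous f ∧
  ∀ s : ℕ → ℝ, ∃ (φ : ℕ → ℕ) (fbar : ℝ → Y), StrictMono φ ∧
    (∀ t : ℝ, Tendsto (fun n => f (t + s (φ n))) atTop (𝓝 (fbar t))) ∧
    (∀ t : ℝ, Tendsto (fun n => fbar (t - s (φ n))) atTop (𝓝 (f t)))

/-- `f : ℝ → Y` is asymptotically almost automorphic if `f = g + φ` where `g` is almost
automorphic and `φ` is continuous with `‖φ s‖ → 0` as `s → +∞`. -/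
def AsymptoticallyAlmostAutomorphic {Y : Type*} [NormedAddCommGroup Y] (f : ℝ → Y) : Prop :=
  ∃ g φ : ℝ → Y, AlmostAutomorphic g ∧ Continuous φ ∧
    Tendsto (fun s => ‖φ s‖) atTop (𝓝 0) ∧ ∀ s, f s = g s + φ s

section AuxLemmas
open Set
set_option linter.unusedVariables false
set_option linter.unusedSectionVars false

lemma expIntegrableAux {α : ℝ} (hα : 0 < α) (c : ℝ) :
    IntegrableOn (fun t => Real.exp (α * t)) (Set.Iic c) := by
  rw [← (Measure.measurePreserving_neg (volume : Measure ℝ)).integrableOn_comp_preimage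
      (Homeomorph.neg ℝ).measurableEmbedding]
  simp only [Function.comp_def, neg_preimage, neg_Iic, mul_neg]
  rw [integrableOn_Ici_iff_integrableOn_Ioi]
  simpa [neg_mul] using exp_neg_integrableOn_Ioi (-c) hα

lemma shiftIntegralAux {Y : Type*} [NormedAddCommGroup Y] [NormedSpace ℝ Y]
    (f : ℝ → Y) (s : ℝ) :
    ∫ t in Set.Iic s, f t = ∫ t in Set.Iic 0, f (t + s) := by
  rw [← integral_indicator measurableSet_Iic, ← integral_indicator measurableSet_Iic,
    ← integral_add_right_eq_self (Set.indicator (Set.Iic s) f) s]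
  congr 1
  funext t
  by_cases h : t ≤ 0 <;>
    simp [Set.indicator_apply, Set.mem_Iic, h, add_le_iff_nonpos_left]


variable {Y : Type*} [NormedAddCommGroup Y] [NormedSpace ℝ Y]

lemma normBoundAux (T : ℝ → Y →L[ℝ] Y) (M α : ℝ) (hM : 0 ≤ M)
    (hTbound : ∀ t ≥ (0 : ℝ), ‖T t‖ ≤ M * Real.exp (-α * t))
    {C : ℝ} (x : Y) (hx : ‖x‖ ≤ C) {t : ℝ} (ht : t ≤ 0) :
    ‖T (-t) x‖ ≤ M * C * Real.exp (α * t) := by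
  have h1 : ‖T (-t) x‖ ≤ ‖T (-t)‖ * ‖x‖ := (T (-t)).le_opNorm x
  have h2 : ‖T (-t)‖ ≤ M * Real.exp (α * t) := by
    have := hTbound (-t) (by linarith)
    simpa [neg_mul, mul_neg, neg_neg] using this
  have hC : 0 ≤ C := le_trans (norm_nonneg x) hx
  calc ‖T (-t) x‖ ≤ (M * Real.exp (α * t)) * C := by
        refine h1.trans (mul_le_mul h2 hx (norm_nonneg x) ?_)
        positivity
    _ = M * C * Real.exp (α * t) := by ring

lemma contOnAux (T : ℝ → Y →L[ℝ] Y) (M : ℝ)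
    (hMb : ∀ t ≥ (0 : ℝ), ‖T t‖ ≤ M)
    (hTcont : ∀ x : Y, ContinuousOn (fun t => T t x) (Set.Ici (0 : ℝ)))
    (f : ℝ → Y) (hf : Continuous f) :
    ContinuousOn (fun t => T (-t) (f t)) (Set.Iic (0 : ℝ)) := by
  intro t₀ ht₀
  have ht₀' : (0 : ℝ) ≤ -t₀ := by simpa using ht₀
  have h1 : ContinuousWithinAt (fun t => T (-t) (f t₀)) (Set.Iic 0) t₀ := by
    refine ((hTcont (f t₀)) (-t₀) ht₀').comp
      (continuous_neg.continuousWithinAt) ?_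
    intro t ht
    simpa using ht
  have h2 : Tendsto (fun t => T (-t) (f t - f t₀)) (𝓝[Set.Iic 0] t₀) (𝓝 0) := by
    apply squeeze_zero_norm' (a := fun t => M * ‖f t - f t₀‖)
    · filter_upwards [self_mem_nhdsWithin] with t ht
      calc ‖T (-t) (f t - f t₀)‖ ≤ ‖T (-t)‖ * ‖f t - f t₀‖ := (T (-t)).le_opNorm _
        _ ≤ M * ‖f t - f t₀‖ := by
            refine mul_le_mul_of_nonneg_right (hMb (-t) (by simpa using ht)) (norm_nonneg _)
    · have : Tendsto (fun t => f t - f t₀) (𝓝[Set.Iic 0] t₀) (𝓝 0) := by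
        have h3 : Tendsto f (𝓝[Set.Iic 0] t₀) (𝓝 (f t₀)) :=
          (hf.tendsto t₀).mono_left nhdsWithin_le_nhds
        simpa using h3.sub (show Tendsto (fun _ : ℝ => f t₀) (𝓝[Set.Iic 0] t₀) (𝓝 (f t₀)) from tendsto_const_nhds)
      simpa using (this.norm.const_mul M)
  have key : Tendsto (fun t => T (-t) (f t)) (𝓝[Set.Iic 0] t₀) (𝓝 (T (-t₀) (f t₀))) := by
    have := h2.add h1
    simp only [zero_add] at this
    convert this using 2 with t
    simp [map_sub]
  exact key

lemma integrableAux0 (T : ℝ → Y →L[ℝ] Y) (M α : ℝ) (hM : 0 ≤ M) (hα : 0 < α)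
    (hTbound : ∀ t ≥ (0 : ℝ), ‖T t‖ ≤ M * Real.exp (-α * t))
    (f : ℝ → Y) (C : ℝ) (hC : ∀ t, ‖f t‖ ≤ C)
    (hmeas : AEStronglyMeasurable (fun t => T (-t) (f t))
      ((volume : Measure ℝ).restrict (Set.Iic 0))) :
    IntegrableOn (fun t => T (-t) (f t)) (Set.Iic (0 : ℝ)) := by
  apply Integrable.mono' ((expIntegrableAux hα 0).const_mul (M * C)) hmeas
  rw [ae_restrict_iff' measurableSet_Iic]
  filter_upwards with t ht
  exact normBoundAux T M α hM hTbound (f t) (hC t) ht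

lemma tendstoAux [CompleteSpace Y] (T : ℝ → Y →L[ℝ] Y) (M α : ℝ) (hα : 0 < α)
    {ι : Type*} {l : Filter ι} [l.IsCountablyGenerated] [l.NeBot]
    (F : ι → ℝ → Y) (f : ℝ → Y) (C : ℝ)
    (hmeas : ∀ n, AEStronglyMeasurable (F n) ((volume : Measure ℝ).restrict (Set.Iic 0)))
    (hbound : ∀ n, ∀ t ≤ (0 : ℝ), ‖F n t‖ ≤ M * C * Real.exp (α * t))
    (hlim : ∀ t ≤ (0 : ℝ), Tendsto (fun n => F n t) l (𝓝 (f t))) :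
    Tendsto (fun n => ∫ t in Set.Iic 0, F n t) l (𝓝 (∫ t in Set.Iic 0, f t)) := by
  apply tendsto_integral_filter_of_dominated_convergence
    (fun t => M * C * Real.exp (α * t))
    (Eventually.of_forall hmeas) ?_ ((expIntegrableAux hα 0).const_mul (M * C)) ?_
  · filter_upwards with n
    rw [ae_restrict_iff' measurableSet_Iic]
    filter_upwards with t ht
    exact hbound n t ht
  · rw [ae_restrict_iff' measurableSet_Iic]
    filter_upwards with t ht
    exact hlim t ht

lemma aaBounded {f : ℝ → Y}
    (hf : Continuous f ∧
      ∀ s : ℕ → ℝ, ∃ (φ : ℕ → ℕ) (fbar : ℝ → Y), StrictMono φ ∧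
        (∀ t : ℝ, Tendsto (fun n => f (t + s (φ n))) atTop (𝓝 (fbar t))) ∧
        (∀ t : ℝ, Tendsto (fun n => fbar (t - s (φ n))) atTop (𝓝 (f t)))) :
    ∃ C, ∀ t, ‖f t‖ ≤ C := by
  by_contra h
  push_neg at h
  have hs : ∀ n : ℕ, ∃ t, (n : ℝ) < ‖f t‖ := fun n => by
    obtain ⟨t, ht⟩ := h n
    exact ⟨t, ht⟩
  choose s hs using hs
  obtain ⟨φ, fbar, hφ, h1, -⟩ := hf.2 s
  have h2 : Tendsto (fun n => ‖f (0 + s (φ n))‖) atTop atTop := by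
    apply tendsto_atTop_mono (fun n => ?_) tendsto_natCast_atTop_atTop
    simp only [zero_add]
    calc (n : ℝ) ≤ (φ n : ℝ) := Nat.cast_le.mpr (hφ.le_apply)
      _ ≤ ‖f (s (φ n))‖ := (hs (φ n)).le
  exact not_tendsto_atTop_of_tendsto_nhds (h1 0).norm h2

end AuxLemmas

/-- Convolution with an exponentially stable `C₀`-semigroup preserves asymptotic almost
automorphy: if `‖T t‖ ≤ M e^{-α t}` for `t ≥ 0` and `g` is bounded, continuous and
asymptotically almost automorphic, then `Λ s = ∫_{-∞}^s T (s - t) (g t) dt` converges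
absolutely for every `s` and `Λ` is asymptotically almost automorphic. -/

theorem convolution_semigroup_asymptoticallyAlmostAutomorphic
    {Y : Type*} [NormedAddCommGroup Y] [NormedSpace ℝ Y] [CompleteSpace Y]
    (T : ℝ → Y →L[ℝ] Y) (M α : ℝ) (hM : 1 ≤ M) (hα : 0 < α)
    (hT0 : T 0 = ContinuousLinearMap.id ℝ Y)
    (hTadd : ∀ t ≥ (0 : ℝ), ∀ s ≥ (0 : ℝ), T (t + s) = (T t).comp (T s))
    (hTcont : ∀ x : Y, ContinuousOn (fun t => T t x) (Set.Ici (0 : ℝ)))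
    (hTbound : ∀ t ≥ (0 : ℝ), ‖T t‖ ≤ M * Real.exp (-α * t))
    (g : ℝ → Y) (hgcont : Continuous g) (hgbdd : ∃ C, ∀ t : ℝ, ‖g t‖ ≤ C)
    (hgaaa : AsymptoticallyAlmostAutomorphic g) :
    (∀ s : ℝ, IntegrableOn (fun t => T (s - t) (g t)) (Set.Iic s)) ∧
    AsymptoticallyAlmostAutomorphic (fun s => ∫ t in Set.Iic s, T (s - t) (g t)) := by
  obtain ⟨Cg, hCg⟩ := hgbdd
  have hM0 : (0 : ℝ) ≤ M := le_trans zero_le_one hM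
  have hMb : ∀ t ≥ (0 : ℝ), ‖T t‖ ≤ M := by
    intro t ht
    have h1 := hTbound t ht
    have h2 : Real.exp (-α * t) ≤ 1 := Real.exp_le_one_iff.mpr (by nlinarith)
    nlinarith [Real.exp_pos (-α * t)]
  have contOn : ∀ f : ℝ → Y, Continuous f →
      ContinuousOn (fun t => T (-t) (f t)) (Set.Iic 0) :=
    fun f hf => contOnAux T M hMb hTcont f hf
  have measAux : ∀ f : ℝ → Y, Continuous f →
      AEStronglyMeasurable (fun t => T (-t) (f t))
        ((volume : Measure ℝ).restrict (Set.Iic 0)) :=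
    fun f hf => (contOn f hf).aestronglyMeasurable measurableSet_Iic
  -- Part 1: integrability on Iic s
  have intPart : ∀ (f : ℝ → Y), Continuous f → ∀ C, (∀ t, ‖f t‖ ≤ C) → ∀ s : ℝ,
      IntegrableOn (fun t => T (s - t) (f t)) (Set.Iic s) := by
    intro f hf C hC s
    have hcont : ContinuousOn (fun t => T (s - t) (f t)) (Set.Iic s) := by
      have h := (contOn (fun u => f (u + s)) (hf.comp (continuous_add_right s))).comp
        ((continuous_sub_right s).continuousOn (s := Set.Iic s))
        (fun t ht => by simpa [Set.mem_Iic, sub_nonpos] using ht)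
      simpa [Function.comp_def, neg_sub, sub_add_cancel] using h
    apply Integrable.mono'
      ((expIntegrableAux hα s).const_mul (M * C * Real.exp (-α * s)))
      (hcont.aestronglyMeasurable measurableSet_Iic)
    rw [ae_restrict_iff' measurableSet_Iic]
    filter_upwards with t ht
    have h1 : ‖T (s - t) (f t)‖ ≤ M * C * Real.exp (α * (t - s)) := by
      have := normBoundAux T M α hM0 hTbound (f t) (hC t) (t := t - s) (by simp at ht; linarith)
      simpa [neg_sub] using this
    calc ‖T (s - t) (f t)‖ ≤ M * C * Real.exp (α * (t - s)) := h1
      _ = M * C * Real.exp (-α * s) * Real.exp (α * t) := by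
          rw [show α * (t - s) = -α * s + α * t by ring, Real.exp_add]; ring
  -- decomposition
  obtain ⟨G, φ, hGaa, hφcont, hφ0, hdecomp⟩ := hgaaa
  obtain ⟨CG, hCG⟩ := aaBounded hGaa
  have hCφ : ∀ t, ‖φ t‖ ≤ Cg + CG := by
    intro t
    have hφt : φ t = g t - G t := by rw [hdecomp t]; abel
    rw [hφt]
    exact (norm_sub_le _ _).trans (add_le_add (hCg t) (hCG t))
  -- shift identity
  have hshift : ∀ (f : ℝ → Y) (s : ℝ),
      (∫ t in Set.Iic s, T (s - t) (f t)) = ∫ t in Set.Iic 0, T (-t) (f (t + s)) := by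
    intro f s
    rw [shiftIntegralAux (fun t => T (s - t) (f t)) s]
    have e : ∀ t : ℝ, s - (t + s) = -t := fun t => by ring
    simp only [e]
  -- generic continuity of the convolution
  have contConv : ∀ (f : ℝ → Y), Continuous f → ∀ C, (∀ t, ‖f t‖ ≤ C) →
      Continuous (fun u => ∫ t in Set.Iic 0, T (-t) (f (t + u))) := by
    intro f hf C hC
    rw [continuous_iff_seqContinuous]
    intro x p hx
    show Tendsto (fun n => ∫ t in Set.Iic 0, T (-t) (f (t + x n))) atTop
      (𝓝 (∫ t in Set.Iic 0, T (-t) (f (t + p))))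
    apply tendstoAux T M α hα _ _ C
    · intro n
      exact measAux (fun t => f (t + x n)) (hf.comp (continuous_add_right _))
    · intro n t ht
      exact normBoundAux T M α hM0 hTbound _ (hC _) ht
    · intro t ht
      exact ((T (-t)).continuous.tendsto _).comp ((hf.tendsto _).comp
        (tendsto_const_nhds.add hx))
  -- decay of the φ-part
  have hφtends : Tendsto φ atTop (𝓝 0) := tendsto_zero_iff_norm_tendsto_zero.mpr hφ0
  have decay : Tendsto (fun u => ∫ t in Set.Iic 0, T (-t) (φ (t + u))) atTop (𝓝 0) := by
    have h := tendstoAux T M α hα (l := (atTop : Filter ℝ))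
      (fun u => fun t => T (-t) (φ (t + u))) (fun _ => (0 : Y)) (Cg + CG)
      (fun u => measAux (fun t => φ (t + u)) (hφcont.comp (continuous_add_right _)))
      (fun u t ht => normBoundAux T M α hM0 hTbound _ (hCφ _) ht)
      (fun t ht => by
        have h1 : Tendsto (fun u : ℝ => t + u) atTop atTop :=
          tendsto_atTop_add_const_left atTop t tendsto_id
        have h2 := ((T (-t)).continuous.tendsto 0).comp (hφtends.comp h1)
        simpa [Function.comp_def] using h2)
    simpa using h
  -- almost automorphy of the G-part
  have haaG : AlmostAutomorphic (fun u => ∫ t in Set.Iic 0, T (-t) (G (t + u))) := by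
    refine ⟨contConv G hGaa.1 CG hCG, ?_⟩
    intro seq
    obtain ⟨ψ, Gbar, hψ, hfor, hback⟩ := hGaa.2 seq
    have hGbarBound : ∀ u, ‖Gbar u‖ ≤ CG := fun u =>
      le_of_tendsto (hfor u).norm (Eventually.of_forall fun n => hCG _)
    have hGbarMeas : ∀ c : ℝ, AEStronglyMeasurable (fun t => T (-t) (Gbar (t + c)))
        ((volume : Measure ℝ).restrict (Set.Iic 0)) := by
      intro c
      apply aestronglyMeasurable_of_tendsto_ae (u := (atTop : Filter ℕ))
        (f := fun k => fun t => T (-t) (G ((t + c) + seq (ψ k))))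
      · intro k
        exact measAux (fun t => G ((t + c) + seq (ψ k)))
          (hGaa.1.comp ((continuous_add_right (seq (ψ k))).comp (continuous_add_right c)))
      · filter_upwards with t
        exact ((T (-t)).continuous.tendsto _).comp (hfor (t + c))
    refine ⟨ψ, fun u => ∫ t in Set.Iic 0, T (-t) (Gbar (t + u)), hψ, ?_, ?_⟩
    · intro u
      have h := tendstoAux T M α hα
        (fun n => fun t => T (-t) (G ((t + u) + seq (ψ n))))
        (fun t => T (-t) (Gbar (t + u))) CG
        (fun n => measAux (fun t => G ((t + u) + seq (ψ n)))
          (hGaa.1.comp ((continuous_add_right (seq (ψ n))).comp (continuous_add_right u))))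
        (fun n t ht => normBoundAux T M α hM0 hTbound _ (hCG _) ht)
        (fun t ht => ((T (-t)).continuous.tendsto _).comp (hfor (t + u)))
      simpa only [add_assoc] using h
    · intro u
      have h := tendstoAux T M α hα
        (fun n => fun t => T (-t) (Gbar ((t + u) - seq (ψ n))))
        (fun t => T (-t) (G (t + u))) CG
        (fun n => by simpa only [← add_sub_assoc] using hGbarMeas (u - seq (ψ n)))
        (fun n t ht => normBoundAux T M α hM0 hTbound _ (hGbarBound _) ht)
        (fun t ht => ((T (-t)).continuous.tendsto _).comp (hback (t + u)))
      simpa only [add_sub_assoc] using h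
  refine ⟨intPart g hgcont Cg hCg, ?_⟩
  refine ⟨fun u => ∫ t in Set.Iic 0, T (-t) (G (t + u)),
    fun u => ∫ t in Set.Iic 0, T (-t) (φ (t + u)),
    haaG, contConv φ hφcont (Cg + CG) hCφ, by simpa using decay.norm, ?_⟩
  intro s
  show (∫ t in Set.Iic s, T (s - t) (g t)) =
    (∫ t in Set.Iic 0, T (-t) (G (t + s))) + ∫ t in Set.Iic 0, T (-t) (φ (t + s))
  rw [hshift g s]
  have hint1 : IntegrableOn (fun t => T (-t) (G (t + s))) (Set.Iic 0) :=
    integrableAux0 T M α hM0 hα hTbound _ CG (fun t => hCG _)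
      (measAux _ (hGaa.1.comp (continuous_add_right s)))
  have hint2 : IntegrableOn (fun t => T (-t) (φ (t + s))) (Set.Iic 0) :=
    integrableAux0 T M α hM0 hα hTbound _ (Cg + CG) (fun t => hCφ _)
      (measAux _ (hφcont.comp (continuous_add_right s)))
  have e : ∀ t : ℝ, T (-t) (g (t + s)) = T (-t) (G (t + s)) + T (-t) (φ (t + s)) := by
    intro t; rw [hdecomp (t + s), map_add]
  simp only [e]
  exact integral_add hint1 hint2
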